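/- Let X : SimpleGraph V be a simple graph and let a group G act on V by automorphisms of X. Assume the action is proper: for every γ ∈ G with γ ≠ 1 and every vertex v, every walk in X from v to γ • v has length at least 4. Let Q be the quotient graph on the orbit space of the action, in which two orbit classes ⟦u⟧ and ⟦v⟧ are adjacent iff ⟦u⟧ ≠ ⟦v⟧ and there exist representatives u' ∈ ⟦u⟧ and v' ∈ ⟦v⟧ with X.Adj u' v'. Then for every vertex v₀ : V, the map u ↦ ⟦u⟧ restricts to a bijection from the neighbour set of v₀ in X onto the neighbour set of ⟦v₀⟧ in Q. -/
import Mathlib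


/-- For a proper group action on a graph, the quotient map to the orbit-space graph
restricts to a bijection from the neighbourhood of any vertex onto the neighbourhood of
its orbit class: the quotient map is a covering map. -/
theorem proper_action_quotient_map_is_local_iso
    (V G : Type*) [Group G] [MulAction G V] (X : SimpleGraph V)
    (hadj : ∀ (γ : G) (u v : V), X.Adj u v → X.Adj (γ • u) (γ • v))
    (hproper : ∀ γ : G, γ ≠ 1 → ∀ (v : V) (w : X.Walk v (γ • v)), 4 ≤ w.length)
    (Q : SimpleGraph (Quotient (MulAction.orbitRel G V)))
    (hQ : ∀ x y : Quotient (MulAction.orbitRel G V),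
      Q.Adj x y ↔ x ≠ y ∧ ∃ u' v' : V,
        Quotient.mk (MulAction.orbitRel G V) u' = x ∧
        Quotient.mk (MulAction.orbitRel G V) v' = y ∧ X.Adj u' v')
    (v₀ : V) :
    Set.BijOn (fun u : V => Quotient.mk (MulAction.orbitRel G V) u)
      (X.neighborSet v₀)
      (Q.neighborSet (Quotient.mk (MulAction.orbitRel G V) v₀)) := by
  -- helper: if two vertices joined by a short walk are in the same orbit, they are equal
  have key : ∀ (u v : V) (w : X.Walk u v), w.length < 4 →
      Quotient.mk (MulAction.orbitRel G V) u = Quotient.mk (MulAction.orbitRel G V) v →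
      u = v := by
    intro u v w hw hq
    have hrel : MulAction.orbitRel G V u v := Quotient.exact hq
    obtain ⟨γ, hγ⟩ := hrel
    have hγ' : γ • v = u := hγ
    by_cases hγ1 : γ = 1
    · rw [hγ1, one_smul] at hγ'; exact hγ'.symm
    · exfalso
      have hu : u = γ • v := hγ'.symm
      subst hu
      have := hproper γ hγ1 v w.reverse
      rw [SimpleGraph.Walk.length_reverse] at this
      omega
  constructor
  · -- MapsTo
    intro u hu
    have hA : X.Adj v₀ u := hu
    show Q.Adj _ _
    rw [hQ]
    refine ⟨?_, v₀, u, rfl, rfl, hA⟩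
    intro h
    exact X.irrefl (key v₀ u hA.toWalk (by simp) h ▸ hA)
  constructor
  · -- InjOn
    intro u hu u' hu' h
    have h1 : X.Adj v₀ u := hu
    have h2 : X.Adj v₀ u' := hu'
    exact key u u' (h1.symm.toWalk.append h2.toWalk) (by simp) h
  · -- SurjOn
    intro y hy
    have hy' : Q.Adj _ y := hy
    rw [hQ] at hy'
    obtain ⟨hne, u', v', hu', hv', hA⟩ := hy'
    have hrel : MulAction.orbitRel G V u' v₀ := Quotient.exact hu'
    obtain ⟨γ, hγ⟩ := hrel
    have hγ' : γ • v₀ = u' := hγ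
    refine ⟨γ⁻¹ • v', ?_, ?_⟩
    · show X.Adj v₀ (γ⁻¹ • v')
      have := hadj γ⁻¹ u' v' hA
      rw [← hγ', inv_smul_smul] at this
      exact this
    · show Quotient.mk _ (γ⁻¹ • v') = y
      rw [← hv']
      exact Quotient.sound ⟨γ⁻¹, rfl⟩
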